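/- Pointwise ergodic theorem for patterns in the Bernoulli shift: Let Γ be a countable group, k ∈ ℕ⁺, and (D_n) a sequence of nonempty finite subsets of Γ with |D_n|/log n → ∞. Then for every finite S ⊆ Γ and every φ : S → k, for u_k^Γ-almost every c ∈ k^Γ, the fraction |D_n ∩ O_φ(c)|/|D_n| converges to k^{−|S|} as n → ∞. -/

import Mathlib

open MeasureTheory Filter Topology Finset
open scoped ENNReal Classical

open scoped Pointwise

set_option maxHeartbeats 1000000


lemma log_one_add_ge {x : ℝ} (hx : 0 ≤ x) : x - x ^ 2 ≤ Real.log (1 + x) := by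
  have h1x : (0:ℝ) < 1 + x := by linarith
  have h := Real.log_le_sub_one_of_pos (show (0:ℝ) < (1 + x)⁻¹ by positivity)
  rw [Real.log_inv] at h
  have hinv : (1 + x) * (1 + x)⁻¹ = 1 := mul_inv_cancel₀ h1x.ne'
  nlinarith [sq_nonneg x, mul_nonneg hx hx, mul_nonneg (mul_nonneg hx hx) hx]

lemma log_one_sub_ge {x : ℝ} (hx : 0 ≤ x) (hx2 : x ≤ 1/2) :
    -(x + 2 * x ^ 2) ≤ Real.log (1 - x) := by
  have h1x : (0:ℝ) < 1 - x := by linarith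
  have h := Real.log_le_sub_one_of_pos (show (0:ℝ) < (1 - x)⁻¹ by positivity)
  rw [Real.log_inv] at h
  have hinv : (1 - x) * (1 - x)⁻¹ = 1 := mul_inv_cancel₀ h1x.ne'
  nlinarith [sq_nonneg x, mul_nonneg hx hx, mul_nonneg (mul_nonneg hx hx) hx]

lemma log_ineq_upper {p ε : ℝ} (hp0 : 0 ≤ p) (hp1 : p ≤ 1) (hε : 0 < ε) (hε1 : ε ≤ 1) :
    Real.log (1 + p * (ε/4)) - (p + ε) * Real.log (1 + ε/4) ≤ -ε^2/8 := by
  have h1 : Real.log (1 + p * (ε/4)) ≤ p * (ε/4) := by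
    have := Real.log_le_sub_one_of_pos (show (0:ℝ) < 1 + p * (ε/4) by nlinarith)
    linarith
  have h2 : (ε/4) - (ε/4)^2 ≤ Real.log (1 + ε/4) := log_one_add_ge (by linarith)
  have h3 : (p + ε) * ((ε/4) - (ε/4)^2) ≤ (p + ε) * Real.log (1 + ε/4) :=
    mul_le_mul_of_nonneg_left h2 (by linarith)
  nlinarith [sq_nonneg ε, mul_nonneg hε.le hε.le]

lemma log_ineq_lower {p ε : ℝ} (hp1 : p ≤ 1) (hε : 0 < ε) (hε1 : ε ≤ 1) (hpε : ε ≤ p) :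
    Real.log (1 - p * (ε/4)) - (p - ε) * Real.log (1 - ε/4) ≤ -ε^2/8 := by
  have hp0 : 0 ≤ p := hε.le.trans hpε
  have h1 : Real.log (1 - p * (ε/4)) ≤ -(p * (ε/4)) := by
    have := Real.log_le_sub_one_of_pos (show (0:ℝ) < 1 - p * (ε/4) by nlinarith)
    linarith
  have h2 : -((ε/4) + 2 * (ε/4)^2) ≤ Real.log (1 - ε/4) :=
    log_one_sub_ge (by linarith) (by linarith)
  have h3 : (p - ε) * (-((ε/4) + 2 * (ε/4)^2)) ≤ (p - ε) * Real.log (1 - ε/4) :=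
    mul_le_mul_of_nonneg_left h2 (by linarith)
  nlinarith [sq_nonneg ε, mul_nonneg hε.le hε.le]

section Aux
variable {Γ : Type*} [Group Γ] (k : ℕ) (S : Finset Γ) (φ : Γ → Fin k)

/-- The occurrence event at position δ. -/
def pattA (δ : Γ) : Set (Γ → Fin k) := {c | ∀ s ∈ S, c (s * δ) = φ s}

/-- T has pairwise disjoint S-translates. -/
def GoodF (T : Finset Γ) : Prop :=
  ∀ δ ∈ T, ∀ δ' ∈ T, δ ≠ δ' → Disjoint (S.image (· * δ)) (S.image (· * δ'))

lemma goodF_mono {T T' : Finset Γ} (h : T ⊆ T') (hG : GoodF S T') : GoodF S T :=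
  fun δ hδ δ' hδ' hne => hG δ (h hδ) δ' (h hδ') hne

lemma measurable_pattA (δ : Γ) : MeasurableSet (pattA k S φ δ) := by
  have : pattA k S φ δ = ⋂ s ∈ S, (fun c : Γ → Fin k => c (s * δ)) ⁻¹' {φ s} := by
    ext c; simp [pattA]
  rw [this]
  exact MeasurableSet.biInter S.countable_toSet fun s _ =>
    (measurable_pi_apply _) (MeasurableSet.singleton _)

variable (μ : Measure (Γ → Fin k))

lemma meas_iInter_pattA
    (hcyl : ∀ (F : Finset Γ) (ψ : Γ → Fin k),
      μ {c | ∀ γ ∈ F, c γ = ψ γ} = ((k : ℝ≥0∞) ^ F.card)⁻¹)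
    {I : Finset Γ} (hG : GoodF S I) :
    μ (⋂ δ ∈ I, pattA k S φ δ) = (((k : ℝ≥0∞) ^ S.card)⁻¹) ^ I.card := by
  classical
  set F : Finset Γ := I.biUnion (fun δ => S.image (· * δ)) with hF
  set ψ : Γ → Fin k := fun γ =>
    if h : ∃ s, s ∈ S ∧ ∃ δ ∈ I, s * δ = γ then φ h.choose else φ 1 with hψdef
  have hψ : ∀ s ∈ S, ∀ δ ∈ I, ψ (s * δ) = φ s := by
    intro s hs δ hδ
    have h : ∃ s', s' ∈ S ∧ ∃ δ' ∈ I, s' * δ' = s * δ := ⟨s, hs, δ, hδ, rfl⟩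
    simp only [hψdef, dif_pos h]
    obtain ⟨hs', δ', hδ', heq⟩ := h.choose_spec
    have hδδ' : δ' = δ := by
      by_contra hne
      have hd := hG δ' hδ' δ hδ hne
      have h1 : s * δ ∈ S.image (· * δ') := by
        rw [← heq]; exact Finset.mem_image_of_mem _ hs'
      have h2 : s * δ ∈ S.image (· * δ) := Finset.mem_image_of_mem _ hs
      exact (Finset.disjoint_left.1 hd h1) h2
    rw [hδδ'] at heq
    rw [mul_left_injective δ heq]
  have hset : (⋂ δ ∈ I, pattA k S φ δ) = {c | ∀ γ ∈ F, c γ = ψ γ} := by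
    ext c
    simp only [Set.mem_iInter, Set.mem_setOf_eq, pattA, hF, Finset.mem_biUnion,
      Finset.mem_image]
    constructor
    · rintro hc γ ⟨δ, hδ, s, hs, rfl⟩
      rw [hψ s hs δ hδ]
      exact hc δ hδ s hs
    · intro hc δ hδ s hs
      rw [← hψ s hs δ hδ]
      exact hc _ ⟨δ, hδ, s, hs, rfl⟩
  have hcard : F.card = I.card * S.card := by
    rw [hF, Finset.card_biUnion (fun δ hδ δ' hδ' hne => hG δ hδ δ' hδ' hne)]
    rw [Finset.sum_congr rfl (fun δ _ => Finset.card_image_of_injective S (mul_left_injective δ))]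
    rw [Finset.sum_const, smul_eq_mul, mul_comm]
  rw [hset, hcyl F ψ, hcard, pow_mul', ENNReal.inv_pow]
end Aux

section Aux2
variable {Γ : Type*} [Group Γ] {k : ℕ} {S : Finset Γ} {φ : Γ → Fin k}
  {μ : Measure (Γ → Fin k)} [IsProbabilityMeasure μ]
  (hk : 0 < k)
  (hcyl : ∀ (F : Finset Γ) (ψ : Γ → Fin k),
      μ {c | ∀ γ ∈ F, c γ = ψ γ} = ((k : ℝ≥0∞) ^ F.card)⁻¹)

include hk hcyl in
lemma meas_inter_compl
    {I J : Finset Γ} (hIJ : Disjoint I J) (hG : GoodF S (I ∪ J)) :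
    μ ((⋂ δ ∈ I, pattA k S φ δ) ∩ (⋂ δ ∈ J, (pattA k S φ δ)ᶜ))
      = (((k : ℝ≥0∞) ^ S.card)⁻¹) ^ I.card
        * (1 - ((k : ℝ≥0∞) ^ S.card)⁻¹) ^ J.card := by
  classical
  set p : ℝ≥0∞ := ((k : ℝ≥0∞) ^ S.card)⁻¹ with hp
  induction J using Finset.induction generalizing I with
  | empty =>
    simp only [Finset.notMem_empty, Set.iInter_of_empty, Set.iInter_univ, Set.inter_univ,
      Finset.card_empty, pow_zero, mul_one]
    exact meas_iInter_pattA k S φ μ hcyl (by simpa using hG)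
  | @insert a J' haJ' ih =>
    have haI : a ∉ I := fun h => (Finset.disjoint_left.1 hIJ h (Finset.mem_insert_self a J'))
    have hIJ' : Disjoint I J' := hIJ.mono_right (Finset.subset_insert a J')
    have hG1 : GoodF S (I ∪ J') := goodF_mono S (Finset.union_subset_union_right
      (Finset.subset_insert a J')) hG
    have hsubG : insert a I ∪ J' ⊆ I ∪ insert a J' := by
      intro x hx
      rcases Finset.mem_union.1 hx with hx | hx
      · rcases Finset.mem_insert.1 hx with rfl | hx
        · exact Finset.mem_union_right _ (Finset.mem_insert_self x J')
        · exact Finset.mem_union_left _ hx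
      · exact Finset.mem_union_right _ (Finset.mem_insert.2 (Or.inr hx))
    have hG2 : GoodF S (insert a I ∪ J') := goodF_mono S hsubG hG
    have hIJ2 : Disjoint (insert a I) J' := by
      rw [Finset.insert_eq, Finset.disjoint_union_left]
      exact ⟨by simpa using haJ', hIJ'⟩
    set E : Set (Γ → Fin k) := (⋂ δ ∈ I, pattA k S φ δ) ∩ (⋂ δ ∈ J', (pattA k S φ δ)ᶜ)
      with hE
    have key1 : μ E = p ^ I.card * (1 - p) ^ J'.card := ih hIJ' hG1
    have key2 : μ (E ∩ pattA k S φ a) = p * (p ^ I.card * (1 - p) ^ J'.card) := by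
      have : E ∩ pattA k S φ a
          = (⋂ δ ∈ insert a I, pattA k S φ δ) ∩ (⋂ δ ∈ J', (pattA k S φ δ)ᶜ) := by
        rw [hE]
        simp only [Finset.mem_insert, Set.iInter_iInter_eq_or_left]
        rw [Set.inter_comm _ (pattA k S φ a)]
        ext c; simp only [Set.mem_inter_iff, Set.mem_iInter]; tauto
      rw [this, ih hIJ2 hG2, Finset.card_insert_of_notMem haI, pow_succ, mul_comm (p ^ I.card) p,
        mul_assoc]
    have hmeasA : MeasurableSet (E ∩ pattA k S φ a) :=
      (MeasurableSet.inter
        (MeasurableSet.biInter I.countable_toSet fun δ _ => measurable_pattA k S φ δ)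
        (MeasurableSet.biInter J'.countable_toSet fun δ _ => (measurable_pattA k S φ δ).compl)).inter
        (measurable_pattA k S φ a)
    have hsub : E ∩ pattA k S φ a ⊆ E := Set.inter_subset_left
    have hsplit : (⋂ δ ∈ I, pattA k S φ δ) ∩ (⋂ δ ∈ insert a J', (pattA k S φ δ)ᶜ)
        = E \ (E ∩ pattA k S φ a) := by
      rw [hE]
      simp only [Finset.mem_insert, Set.iInter_iInter_eq_or_left]
      ext c
      simp only [Set.mem_diff, Set.mem_inter_iff, Set.mem_iInter, Set.mem_compl_iff]
      tauto
    rw [hsplit, measure_diff hsub hmeasA.nullMeasurableSet (measure_ne_top μ _), key1, key2,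
      Finset.card_insert_of_notMem haJ']
    have ha : p ^ I.card * (1 - p) ^ J'.card ≠ ⊤ := by
      refine ENNReal.mul_ne_top (ENNReal.pow_ne_top ?_) (ENNReal.pow_ne_top ?_)
      · rw [hp]; exact ENNReal.inv_ne_top.2 (by positivity)
      · exact (tsub_le_self.trans_lt ENNReal.one_lt_top).ne
    have hpfin : p ≠ ⊤ := by rw [hp]; exact ENNReal.inv_ne_top.2 (by positivity)
    rw [pow_succ, ← mul_assoc, mul_comm p (p ^ I.card), mul_assoc,
      ← ENNReal.mul_sub (fun _ _ => ENNReal.pow_ne_top hpfin)]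
    congr 1
    rw [show (1 - p) ^ J'.card - p * (1 - p) ^ J'.card = (1 - p) ^ J'.card * (1 - p) from by
      rw [ENNReal.mul_sub (fun _ _ => ENNReal.pow_ne_top
        ((tsub_le_self.trans_lt ENNReal.one_lt_top).ne)), mul_one, mul_comm p _]]

lemma measurable_count {T : Finset Γ} :
    Measurable fun c : Γ → Fin k => (T.filter fun δ => c ∈ pattA k S φ δ).card := by
  have : ∀ c : Γ → Fin k, (T.filter fun δ => c ∈ pattA k S φ δ).card
      = ∑ δ ∈ T, if c ∈ pattA k S φ δ then 1 else 0 := by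
    intro c
    rw [Finset.card_filter]
  simp only [this]
  exact Finset.measurable_sum T fun δ _ => Measurable.ite (measurable_pattA k S φ δ)
    measurable_const measurable_const

include hk hcyl in
lemma lintegral_pow_count {T : Finset Γ} (hG : GoodF S T) (s : ℝ≥0∞) :
    ∫⁻ c, s ^ ((T.filter fun δ => c ∈ pattA k S φ δ).card) ∂μ
      = (s * ((k : ℝ≥0∞) ^ S.card)⁻¹ + (1 - ((k : ℝ≥0∞) ^ S.card)⁻¹)) ^ T.card := by
  classical
  set p : ℝ≥0∞ := ((k : ℝ≥0∞) ^ S.card)⁻¹ with hp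
  set EI : Finset Γ → Set (Γ → Fin k) := fun I =>
    (⋂ δ ∈ I, pattA k S φ δ) ∩ (⋂ δ ∈ (T \ I), (pattA k S φ δ)ᶜ) with hEI
  have hEImeas : ∀ I, MeasurableSet (EI I) := fun I =>
    (MeasurableSet.biInter I.countable_toSet fun δ _ => measurable_pattA k S φ δ).inter
      (MeasurableSet.biInter (T \ I).countable_toSet fun δ _ => (measurable_pattA k S φ δ).compl)
  have hpt : ∀ c : Γ → Fin k, s ^ ((T.filter fun δ => c ∈ pattA k S φ δ).card)
      = ∑ I ∈ T.powerset, (EI I).indicator (fun _ => s ^ I.card) c := by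
    intro c
    set I₀ : Finset Γ := T.filter fun δ => c ∈ pattA k S φ δ with hI₀
    have hmem : I₀ ∈ T.powerset := Finset.mem_powerset.2 (Finset.filter_subset _ _)
    rw [Finset.sum_eq_single_of_mem I₀ hmem ?_]
    · have hcE : c ∈ EI I₀ := by
        refine ⟨Set.mem_iInter₂.2 fun δ hδ => (Finset.mem_filter.1 hδ).2, ?_⟩
        refine Set.mem_iInter₂.2 fun δ hδ => ?_
        obtain ⟨hδT, hδI⟩ := Finset.mem_sdiff.1 hδ
        exact fun hc => hδI (Finset.mem_filter.2 ⟨hδT, hc⟩)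
      rw [Set.indicator_of_mem hcE]
    · intro I hI hne
      refine Set.indicator_of_notMem (fun hcE => hne ?_) _
      obtain ⟨h1, h2⟩ := hcE
      ext δ
      simp only [hI₀, Finset.mem_filter]
      constructor
      · intro hδI
        exact ⟨Finset.mem_powerset.1 hI hδI, Set.mem_iInter₂.1 h1 δ hδI⟩
      · rintro ⟨hδT, hc⟩
        by_contra hδI
        exact Set.mem_iInter₂.1 h2 δ (Finset.mem_sdiff.2 ⟨hδT, hδI⟩) hc
  calc ∫⁻ c, s ^ ((T.filter fun δ => c ∈ pattA k S φ δ).card) ∂μ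
      = ∫⁻ c, ∑ I ∈ T.powerset, (EI I).indicator (fun _ => s ^ I.card) c ∂μ := by
        exact lintegral_congr hpt
    _ = ∑ I ∈ T.powerset, ∫⁻ c, (EI I).indicator (fun _ => s ^ I.card) c ∂μ :=
        lintegral_finset_sum _ fun I _ => (measurable_const.indicator (hEImeas I))
    _ = ∑ I ∈ T.powerset, s ^ I.card * μ (EI I) := by
        refine Finset.sum_congr rfl fun I _ => ?_
        rw [lintegral_indicator (hEImeas I), setLIntegral_const]
    _ = ∑ I ∈ T.powerset, (s * p) ^ I.card * (1 - p) ^ (T \ I).card := by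
        refine Finset.sum_congr rfl fun I hI => ?_
        rw [hEI, meas_inter_compl hk hcyl Finset.disjoint_sdiff
          (by rw [Finset.union_sdiff_of_subset (Finset.mem_powerset.1 hI)]; exact hG)]
        rw [mul_pow]; ring
    _ = ∏ δ ∈ T, (s * p + (1 - p)) := by
        rw [Finset.prod_add]
        exact (Finset.sum_congr rfl fun I _ => by
          rw [Finset.prod_const, Finset.prod_const]).symm
    _ = (s * p + (1 - p)) ^ T.card := Finset.prod_const _

lemma hpE (hk : 0 < k) :
    ((k : ℝ≥0∞) ^ S.card)⁻¹ = ENNReal.ofReal (((k:ℝ) ^ S.card)⁻¹) := by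
  rw [ENNReal.ofReal_inv_of_pos (by positivity), ENNReal.ofReal_pow (by positivity),
    ENNReal.ofReal_natCast]

include hk hcyl in
lemma upper_tail {T : Finset Γ} (hG : GoodF S T) {ε : ℝ} (hε : 0 < ε) (hε1 : ε ≤ 1) :
    μ {c | ((((k:ℝ) ^ S.card)⁻¹ + ε) * T.card : ℝ)
        ≤ ((T.filter fun δ => c ∈ pattA k S φ δ).card : ℝ)}
      ≤ ENNReal.ofReal (Real.exp (-ε^2 * T.card / 8)) := by
  classical
  set pr : ℝ := ((k:ℝ) ^ S.card)⁻¹ with hprdef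
  have hpr0 : 0 < pr := by rw [hprdef]; positivity
  have hpr1 : pr ≤ 1 := by
    rw [hprdef]
    exact inv_le_one_of_one_le₀ (one_le_pow₀ (Nat.one_le_cast.mpr hk))
  set n : ℕ := T.card with hn
  set x : ℝ := ε/4 with hxdef
  have hx0 : 0 < x := by positivity
  have hx1 : x ≤ 1/4 := by rw [hxdef]; linarith
  set s : ℝ≥0∞ := ENNReal.ofReal (1 + x) with hsdef
  have hs1 : 1 ≤ s := by
    rw [hsdef, ENNReal.one_le_ofReal]; linarith
  have hsge : ∀ c : Γ → Fin k, ((pr + ε) * n : ℝ) ≤ ((T.filter fun δ => c ∈ pattA k S φ δ).card : ℝ)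
      → s ^ (((pr + ε) * n : ℝ)) ≤ s ^ ((T.filter fun δ => c ∈ pattA k S φ δ).card) := by
    intro c hc
    rw [← ENNReal.rpow_natCast s]
    exact ENNReal.rpow_le_rpow_of_exponent_le hs1 hc
  have hmeas : AEMeasurable (fun c : Γ → Fin k => s ^ ((T.filter fun δ => c ∈ pattA k S φ δ).card)) μ := by
    exact ((measurable_from_top (f := fun m : ℕ => s ^ m)).comp measurable_count).aemeasurable
  have hthr0 : s ^ (((pr + ε) * n : ℝ)) ≠ 0 :=
    (ENNReal.rpow_pos (lt_of_lt_of_le one_pos hs1) (by rw [hsdef]; exact ENNReal.ofReal_ne_top)).ne'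
  have hthrT : s ^ (((pr + ε) * n : ℝ)) ≠ ⊤ := by
    refine ENNReal.rpow_ne_top_of_nonneg (by positivity) (by rw [hsdef]; exact ENNReal.ofReal_ne_top)
  calc μ {c | ((pr + ε) * n : ℝ) ≤ ((T.filter fun δ => c ∈ pattA k S φ δ).card : ℝ)}
      ≤ μ {c | s ^ (((pr + ε) * n : ℝ)) ≤ s ^ ((T.filter fun δ => c ∈ pattA k S φ δ).card)} :=
        measure_mono fun c hc => hsge c hc
    _ ≤ (∫⁻ c, s ^ ((T.filter fun δ => c ∈ pattA k S φ δ).card) ∂μ) / s ^ (((pr + ε) * n : ℝ)) :=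
        meas_ge_le_lintegral_div hmeas hthr0 hthrT
    _ = ENNReal.ofReal ((1 + pr * x) ^ n) / ENNReal.ofReal ((1 + x) ^ (((pr + ε) * n : ℝ))) := by
        rw [lintegral_pow_count hk hcyl hG s]
        congr 1
        · rw [hpE hk, ← hprdef, hsdef, ← ENNReal.ofReal_one, ← ENNReal.ofReal_sub _ hpr0.le,
            ← ENNReal.ofReal_mul (by linarith), ← ENNReal.ofReal_add (by nlinarith) (by linarith),
            ← ENNReal.ofReal_pow (by nlinarith)]
          congr 2
          ring
        · rw [hsdef, ENNReal.ofReal_rpow_of_pos (by linarith)]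
    _ = ENNReal.ofReal ((1 + pr * x) ^ n / (1 + x) ^ (((pr + ε) * n : ℝ))) := by
        rw [ENNReal.ofReal_div_of_pos (Real.rpow_pos_of_pos (by linarith) _)]
    _ ≤ ENNReal.ofReal (Real.exp (-ε^2 * n / 8)) := by
        apply ENNReal.ofReal_le_ofReal
        have e1 : (1 + pr * x) ^ n = Real.exp (Real.log (1 + pr * x) * n) := by
          rw [← Real.rpow_natCast (1 + pr * x) n, Real.rpow_def_of_pos (by nlinarith)]
        have e2 : (1 + x) ^ (((pr + ε) * n : ℝ)) = Real.exp (Real.log (1 + x) * ((pr + ε) * n)) := by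
          rw [Real.rpow_def_of_pos (by linarith)]
        rw [e1, e2, ← Real.exp_sub]
        apply Real.exp_le_exp.2
        have hkey := log_ineq_upper hpr0.le hpr1 hε hε1
        rw [← hxdef] at hkey
        have hn0 : (0:ℝ) ≤ n := Nat.cast_nonneg n
        nlinarith [mul_le_mul_of_nonneg_right hkey hn0]

include hk hcyl in
lemma lower_tail {T : Finset Γ} (hG : GoodF S T) {ε : ℝ} (hε : 0 < ε) (hε1 : ε ≤ 1) :
    μ {c | ((T.filter fun δ => c ∈ pattA k S φ δ).card : ℝ)
        ≤ ((((k:ℝ) ^ S.card)⁻¹ - ε) * T.card : ℝ)}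
      ≤ ENNReal.ofReal (Real.exp (-ε^2 * T.card / 8)) := by
  classical
  set pr : ℝ := ((k:ℝ) ^ S.card)⁻¹ with hprdef
  have hpr0 : 0 < pr := by rw [hprdef]; positivity
  have hpr1 : pr ≤ 1 := by
    rw [hprdef]
    exact inv_le_one_of_one_le₀ (one_le_pow₀ (Nat.one_le_cast.mpr hk))
  set n : ℕ := T.card with hn
  rcases le_or_gt ε pr with hple | hplt
  · -- main Chernoff computation
    set x : ℝ := ε/4 with hxdef
    have hx0 : 0 < x := by positivity
    have hx1 : x ≤ 1/4 := by rw [hxdef]; linarith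
    set r : ℝ≥0∞ := ENNReal.ofReal (1 - x) with hrdef
    have hr1 : r ≤ 1 := by rw [hrdef]; exact ENNReal.ofReal_le_one.2 (by linarith)
    have hr0 : 0 < r := by rw [hrdef]; exact ENNReal.ofReal_pos.2 (by linarith)
    have hge : ∀ c : Γ → Fin k,
        ((T.filter fun δ => c ∈ pattA k S φ δ).card : ℝ) ≤ ((pr - ε) * n : ℝ)
        → r ^ (((pr - ε) * n : ℝ)) ≤ r ^ ((T.filter fun δ => c ∈ pattA k S φ δ).card) := by
      intro c hc
      rw [← ENNReal.rpow_natCast r]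
      exact ENNReal.rpow_le_rpow_of_exponent_ge hr1 hc
    have hmeas : AEMeasurable (fun c : Γ → Fin k => r ^ ((T.filter fun δ => c ∈ pattA k S φ δ).card)) μ :=
      ((measurable_from_top (f := fun m : ℕ => r ^ m)).comp measurable_count).aemeasurable
    have hthr0 : r ^ (((pr - ε) * n : ℝ)) ≠ 0 :=
      (ENNReal.rpow_pos hr0 (by rw [hrdef]; exact ENNReal.ofReal_ne_top)).ne'
    have hthrT : r ^ (((pr - ε) * n : ℝ)) ≠ ⊤ :=
      ENNReal.rpow_ne_top_of_nonneg (mul_nonneg (by linarith) (Nat.cast_nonneg n))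
        (by rw [hrdef]; exact ENNReal.ofReal_ne_top)
    calc μ {c | ((T.filter fun δ => c ∈ pattA k S φ δ).card : ℝ) ≤ ((pr - ε) * n : ℝ)}
        ≤ μ {c | r ^ (((pr - ε) * n : ℝ)) ≤ r ^ ((T.filter fun δ => c ∈ pattA k S φ δ).card)} :=
          measure_mono fun c hc => hge c hc
      _ ≤ (∫⁻ c, r ^ ((T.filter fun δ => c ∈ pattA k S φ δ).card) ∂μ) / r ^ (((pr - ε) * n : ℝ)) :=
          meas_ge_le_lintegral_div hmeas hthr0 hthrT
      _ = ENNReal.ofReal ((1 - pr * x) ^ n / (1 - x) ^ (((pr - ε) * n : ℝ))) := by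
          rw [lintegral_pow_count hk hcyl hG r]
          rw [ENNReal.ofReal_div_of_pos (Real.rpow_pos_of_pos (by linarith) _)]
          congr 1
          · rw [hpE hk, ← hprdef, hrdef, ← ENNReal.ofReal_one, ← ENNReal.ofReal_sub _ hpr0.le,
              ← ENNReal.ofReal_mul (by linarith), ← ENNReal.ofReal_add (by nlinarith) (by linarith),
              ← ENNReal.ofReal_pow (by nlinarith)]
            congr 2
            ring
          · rw [hrdef, ENNReal.ofReal_rpow_of_pos (by linarith)]
      _ ≤ ENNReal.ofReal (Real.exp (-ε^2 * n / 8)) := by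
          apply ENNReal.ofReal_le_ofReal
          have e1 : (1 - pr * x) ^ n = Real.exp (Real.log (1 - pr * x) * n) := by
            rw [← Real.rpow_natCast (1 - pr * x) n, Real.rpow_def_of_pos (by nlinarith)]
          have e2 : (1 - x) ^ (((pr - ε) * n : ℝ)) = Real.exp (Real.log (1 - x) * ((pr - ε) * n)) := by
            rw [Real.rpow_def_of_pos (by linarith)]
          rw [e1, e2, ← Real.exp_sub]
          apply Real.exp_le_exp.2
          have hkey := log_ineq_lower hpr1 hε hε1 hple
          rw [← hxdef] at hkey
          have hn0 : (0:ℝ) ≤ n := Nat.cast_nonneg n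
          nlinarith [mul_le_mul_of_nonneg_right hkey hn0]
  · -- pr < ε : the event is (essentially) empty
    rcases Nat.eq_zero_or_pos n with hn0 | hnpos
    · rw [hn0]
      simp only [Nat.cast_zero, mul_zero, neg_zero, zero_div, Real.exp_zero,
        ENNReal.ofReal_one]
      exact (measure_mono (Set.subset_univ _)).trans_eq measure_univ
    · have hsub : {c : Γ → Fin k | ((T.filter fun δ => c ∈ pattA k S φ δ).card : ℝ)
          ≤ ((pr - ε) * n : ℝ)} = ∅ := by
        ext c
        simp only [Set.mem_setOf_eq, Set.mem_empty_iff_false, iff_false, not_le]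
        have : ((pr - ε) * n : ℝ) < 0 :=
          mul_neg_of_neg_of_pos (by linarith) (by exact_mod_cast hnpos)
        exact this.trans_le (Nat.cast_nonneg _)
      rw [hsub, measure_empty]
      exact zero_le
end Aux2

section Coloring
variable {Γ : Type*} [Group Γ]

lemma exists_coloring (S : Finset Γ) (hS : S.Nonempty) (T : Finset Γ) :
    ∃ f : Γ → ℕ, (∀ δ ∈ T, f δ < (S⁻¹ * S).card) ∧
      ∀ δ ∈ T, ∀ δ' ∈ T, δ ≠ δ' → f δ = f δ' →
        Disjoint (S.image (· * δ)) (S.image (· * δ')) := by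
  classical
  set m := (S⁻¹ * S).card with hm
  induction T using Finset.induction with
  | empty => exact ⟨fun _ => 0, by simp, by simp⟩
  | @insert a T' haT ih =>
    obtain ⟨f, hlt, hcol⟩ := ih
    set Nbr : Finset Γ :=
      T'.filter (fun δ' => ¬ Disjoint (S.image (· * a)) (S.image (· * δ'))) with hNbr
    have hNbrsub : Nbr ⊆ ((S⁻¹ * S).image (· * a)).erase a := by
      intro δ' hδ'
      obtain ⟨hδ'T, hnd⟩ := Finset.mem_filter.1 hδ'
      rw [Finset.not_disjoint_iff] at hnd
      obtain ⟨γ, hγ1, hγ2⟩ := hnd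
      obtain ⟨s, hs, rfl⟩ := Finset.mem_image.1 hγ1
      obtain ⟨s', hs', heq⟩ := Finset.mem_image.1 hγ2
      refine Finset.mem_erase.2 ⟨ne_of_mem_of_not_mem hδ'T haT, ?_⟩
      refine Finset.mem_image.2 ⟨s'⁻¹ * s, ?_, ?_⟩
      · exact Finset.mul_mem_mul (Finset.inv_mem_inv hs') hs
      · show s'⁻¹ * s * a = δ'
        rw [mul_assoc, show s * a = s' * δ' from heq.symm]
        group
    have haimg : a ∈ (S⁻¹ * S).image (· * a) := by
      obtain ⟨s, hs⟩ := hS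
      exact Finset.mem_image.2 ⟨s⁻¹ * s, Finset.mul_mem_mul (Finset.inv_mem_inv hs) hs,
        by group⟩
    have hcardNbr : Nbr.card ≤ m - 1 := by
      calc Nbr.card ≤ (((S⁻¹ * S).image (· * a)).erase a).card := Finset.card_le_card hNbrsub
        _ = ((S⁻¹ * S).image (· * a)).card - 1 := Finset.card_erase_of_mem haimg
        _ ≤ m - 1 := by
          exact Nat.sub_le_sub_right (le_trans Finset.card_image_le le_rfl) 1
    have hm0 : 0 < m := by
      rw [hm]
      exact Finset.card_pos.2 (Finset.image_nonempty.1 ⟨a, haimg⟩)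
    obtain ⟨j, hjm, hjnot⟩ : ∃ j, j < m ∧ j ∉ Nbr.image f := by
      by_contra hcon
      push_neg at hcon
      have hsub2 : Finset.range m ⊆ Nbr.image f := fun j hj =>
        hcon j (Finset.mem_range.1 hj)
      have h1 := Finset.card_le_card hsub2
      rw [Finset.card_range] at h1
      have h2 : (Nbr.image f).card ≤ m - 1 := le_trans Finset.card_image_le hcardNbr
      omega
    have key : ∀ δ' ∈ T', Function.update f a j δ' = j →
        Disjoint (S.image (· * a)) (S.image (· * δ')) := by
      intro δ' hδ'T heq
      rw [Function.update_of_ne (ne_of_mem_of_not_mem hδ'T haT)] at heq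
      by_contra hnd
      exact hjnot (heq ▸ Finset.mem_image_of_mem f (Finset.mem_filter.2 ⟨hδ'T, hnd⟩))
    refine ⟨Function.update f a j, ?_, ?_⟩
    · intro δ hδ
      rcases Finset.mem_insert.1 hδ with rfl | hδ
      · rw [Function.update_self]; exact hjm
      · rw [Function.update_of_ne (ne_of_mem_of_not_mem hδ haT)]; exact hlt δ hδ
    · intro δ hδ δ' hδ' hne heq
      rcases Finset.mem_insert.1 hδ with h1 | hδT <;>
        rcases Finset.mem_insert.1 hδ' with h2 | hδ'T
      · exact absurd (h1.trans h2.symm) hne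
      · subst h1
        rw [Function.update_self] at heq
        exact key δ' hδ'T heq.symm
      · subst h2
        rw [Function.update_self] at heq
        exact (key δ hδT heq).symm
      · rw [Function.update_of_ne (ne_of_mem_of_not_mem hδT haT),
          Function.update_of_ne (ne_of_mem_of_not_mem hδ'T haT)] at heq
        exact hcol δ hδT δ' hδ'T hne heq
end Coloring

section Main
variable {Γ : Type*} [Group Γ]

lemma main_eps {k : ℕ} (hk : 0 < k)
    {μ : Measure (Γ → Fin k)} [IsProbabilityMeasure μ]
    (hcyl : ∀ (F : Finset Γ) (ψ : Γ → Fin k),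
      μ {c | ∀ γ ∈ F, c γ = ψ γ} = ((k : ℝ≥0∞) ^ F.card)⁻¹)
    (D : ℕ → Finset Γ) (hne : ∀ n, (D n).Nonempty)
    (hgrowth : Tendsto (fun n : ℕ => ((D n).card : ℝ) / Real.log n) atTop atTop)
    (S : Finset Γ) (hS : S.Nonempty) (φ : Γ → Fin k)
    {ε : ℝ} (hε : 0 < ε) (hε1 : ε ≤ 1) :
    ∀ᵐ c ∂μ, ∀ᶠ n in atTop,
      |(((D n).filter fun δ => c ∈ pattA k S φ δ).card : ℝ) / ((D n).card : ℝ)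
        - ((k:ℝ) ^ S.card)⁻¹| ≤ ε := by
  classical
  have hpr0 : 0 < ((k:ℝ) ^ S.card)⁻¹ := by positivity
  have hpr1 : ((k:ℝ) ^ S.card)⁻¹ ≤ 1 :=
    inv_le_one_of_one_le₀ (one_le_pow₀ (Nat.one_le_cast.mpr hk))
  obtain ⟨m, hmdef⟩ : ∃ m : ℕ, m = (S⁻¹ * S).card := ⟨_, rfl⟩
  have hm0 : 0 < m := hmdef ▸ Finset.card_pos.2 (Finset.Nonempty.mul hS.inv hS)
  have hmR : (0:ℝ) < m := Nat.cast_pos.2 hm0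
  choose f hflt hfcol using fun n => exists_coloring S hS (D n)
  obtain ⟨C, hC⟩ : ∃ C : ℕ → ℕ → Finset Γ,
      ∀ n j, C n j = (D n).filter (fun δ => f n δ = j) := ⟨_, fun _ _ => rfl⟩
  have hCgood : ∀ n j, GoodF S (C n j) := by
    intro n j δ hδ δ' hδ' hnee
    rw [hC n j] at hδ hδ'
    obtain ⟨h1, h2⟩ := Finset.mem_filter.1 hδ
    obtain ⟨h1', h2'⟩ := Finset.mem_filter.1 hδ'
    exact hfcol n δ h1 δ' h1' hnee (h2.trans h2'.symm)
  obtain ⟨thr, hthr⟩ : ∃ thr : ℕ → ℝ, ∀ n, thr n = (ε/(2*m)) * ((D n).card) :=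
    ⟨_, fun _ => rfl⟩
  have hthr0 : ∀ n, 0 ≤ thr n := fun n => by rw [hthr n]; positivity
  obtain ⟨Bad, hBad⟩ : ∃ Bad : ℕ → Set (Γ → Fin k), ∀ n, Bad n =
      ⋃ j ∈ Finset.range m, if thr n ≤ ((C n j).card : ℝ) then
        ({c | ((((k:ℝ) ^ S.card)⁻¹ + ε/2) * (C n j).card : ℝ)
            ≤ (((C n j).filter fun δ => c ∈ pattA k S φ δ).card : ℝ)} ∪
         {c | (((C n j).filter fun δ => c ∈ pattA k S φ δ).card : ℝ)
            ≤ ((((k:ℝ) ^ S.card)⁻¹ - ε/2) * (C n j).card : ℝ)}) else ∅ := ⟨_, fun _ => rfl⟩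
  obtain ⟨bnd, hbnd⟩ : ∃ bnd : ℕ → ℝ,
      ∀ n, bnd n = 2 * m * Real.exp (-(ε/2)^2 * thr n / 8) := ⟨_, fun _ => rfl⟩
  have hbnd0 : ∀ n, 0 ≤ bnd n := fun n => by rw [hbnd n]; positivity
  have hμBad : ∀ n, μ (Bad n) ≤ ENNReal.ofReal (bnd n) := by
    intro n
    rw [hBad n]
    refine (measure_biUnion_finset_le _ _).trans ?_
    have hone : ∀ j ∈ Finset.range m,
        μ (if thr n ≤ ((C n j).card : ℝ) then
          ({c | ((((k:ℝ) ^ S.card)⁻¹ + ε/2) * (C n j).card : ℝ)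
              ≤ (((C n j).filter fun δ => c ∈ pattA k S φ δ).card : ℝ)} ∪
           {c | (((C n j).filter fun δ => c ∈ pattA k S φ δ).card : ℝ)
              ≤ ((((k:ℝ) ^ S.card)⁻¹ - ε/2) * (C n j).card : ℝ)}) else ∅)
        ≤ 2 * ENNReal.ofReal (Real.exp (-(ε/2)^2 * thr n / 8)) := by
      intro j _
      split_ifs with hbig
      · refine (measure_union_le _ _).trans ?_
        have hεh : (0:ℝ) < ε/2 := by linarith
        have hεh1 : ε/2 ≤ 1 := by linarith
        have hu := upper_tail (φ := φ) hk hcyl (hCgood n j) hεh hεh1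
        have hl := lower_tail (φ := φ) hk hcyl (hCgood n j) hεh hεh1
        have hmono : Real.exp (-(ε/2)^2 * ((C n j).card) / 8)
            ≤ Real.exp (-(ε/2)^2 * thr n / 8) := by
          apply Real.exp_le_exp.2
          nlinarith
        rw [two_mul]
        exact add_le_add (hu.trans (ENNReal.ofReal_le_ofReal hmono))
          (hl.trans (ENNReal.ofReal_le_ofReal hmono))
      · rw [measure_empty]
        exact zero_le
    refine (Finset.sum_le_sum hone).trans ?_
    rw [Finset.sum_const, Finset.card_range, nsmul_eq_mul, hbnd n]
    refine le_of_eq ?_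
    rw [show ((2:ℝ) * m) * Real.exp (-(ε/2)^2 * thr n / 8)
      = (m:ℝ) * (2 * Real.exp (-(ε/2)^2 * thr n / 8)) from by ring]
    rw [ENNReal.ofReal_mul (Nat.cast_nonneg m), ENNReal.ofReal_mul (by norm_num : (0:ℝ) ≤ 2)]
    rw [ENNReal.ofReal_natCast, ENNReal.ofReal_ofNat]
  -- summability
  obtain ⟨cc, hcc⟩ : ∃ cc : ℝ, cc = ε^3/(64*m) := ⟨_, rfl⟩
  have hcc0 : 0 < cc := by rw [hcc]; positivity
  have hbnd_eq : ∀ n, bnd n = 2 * m * Real.exp (-cc * ((D n).card)) := by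
    intro n
    rw [hbnd n, hthr n, hcc]
    congr 2
    field_simp
    ring
  have hev : ∀ᶠ n : ℕ in atTop, bnd n ≤ 2 * m * ((n:ℝ)^2)⁻¹ := by
    have h1 : ∀ᶠ n : ℕ in atTop, 2/cc ≤ ((D n).card : ℝ) / Real.log n :=
      hgrowth.eventually_ge_atTop _
    have h2 : ∀ᶠ n : ℕ in atTop, (3:ℕ) ≤ n := eventually_ge_atTop 3
    filter_upwards [h1, h2] with n hn1 hn2
    have hnR : (3:ℝ) ≤ (n:ℝ) := by exact_mod_cast hn2
    have hn0 : (0:ℝ) < n := by linarith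
    have hlog1 : 1 ≤ Real.log n := by
      rw [Real.le_log_iff_exp_le hn0]
      calc Real.exp 1 ≤ 2.7182818286 := Real.exp_one_lt_d9.le
        _ ≤ (n:ℝ) := by linarith
    have hlogpos : (0:ℝ) < Real.log n := by linarith
    have hD : (2/cc) * Real.log n ≤ ((D n).card:ℝ) := by
      rw [← le_div_iff₀ hlogpos]
      exact hn1
    have h2log : 2 * Real.log n ≤ cc * ((D n).card:ℝ) := by
      have hmul := mul_le_mul_of_nonneg_left hD hcc0.le
      calc 2 * Real.log n = cc * ((2/cc) * Real.log n) := by field_simp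
        _ ≤ cc * ((D n).card:ℝ) := hmul
    rw [hbnd_eq n]
    have hexp : Real.exp (-cc * ((D n).card)) ≤ ((n:ℝ)^2)⁻¹ := by
      have e : ((n:ℝ)^2)⁻¹ = Real.exp (-(2 * Real.log n)) := by
        rw [Real.exp_neg]
        congr 1
        rw [show (2:ℝ) * Real.log n = Real.log n * 2 from mul_comm _ _]
        rw [← Real.rpow_def_of_pos hn0 2, Real.rpow_two]
      rw [e]
      exact Real.exp_le_exp.2 (by linarith)
    nlinarith [Real.exp_pos (-cc * ((D n).card:ℝ))]
  have hsummable : Summable bnd := by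
    have hgsum : Summable (fun n : ℕ => 2 * (m:ℝ) * ((n:ℝ)^2)⁻¹) := by
      have hs := Real.summable_one_div_nat_pow.2 (by norm_num : 1 < 2)
      simpa [one_div] using hs.mul_left (2*(m:ℝ))
    obtain ⟨N, hN⟩ := eventually_atTop.1 hev
    refine (summable_nat_add_iff N).1 ?_
    exact Summable.of_nonneg_of_le (fun i => hbnd0 _)
      (fun i => hN _ (Nat.le_add_left N i)) ((summable_nat_add_iff N).2 hgsum)
  have hsum : ∑' n, μ (Bad n) ≠ ⊤ :=
    ne_top_of_le_ne_top
      (by rw [← ENNReal.ofReal_tsum_of_nonneg hbnd0 hsummable]; exact ENNReal.ofReal_ne_top)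
      (ENNReal.tsum_le_tsum hμBad)
  filter_upwards [ae_eventually_notMem hsum] with c hc
  filter_upwards [hc] with n hn
  have hd0 : (0:ℝ) < ((D n).card : ℝ) := by exact_mod_cast Finset.card_pos.2 (hne n)
  have hmapsto : ∀ δ ∈ D n, f n δ ∈ Finset.range m := fun δ hδ =>
    Finset.mem_range.2 (hmdef ▸ hflt n δ hδ)
  have htot : (((D n).filter fun δ => c ∈ pattA k S φ δ).card : ℕ)
      = ∑ j ∈ Finset.range m, ((C n j).filter fun δ => c ∈ pattA k S φ δ).card := by
    rw [Finset.card_eq_sum_card_fiberwise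
      (f := f n) (t := Finset.range m) (fun δ hδ => hmapsto δ (Finset.mem_filter.1 hδ).1)]
    exact Finset.sum_congr rfl fun j _ => by
      rw [hC n j, Finset.filter_comm]
  have hcards : ((D n).card : ℕ) = ∑ j ∈ Finset.range m, (C n j).card := by
    rw [Finset.card_eq_sum_card_fiberwise hmapsto]
    exact Finset.sum_congr rfl fun j _ => by rw [hC n j]
  rw [hBad n] at hn
  have hnotin : ∀ j ∈ Finset.range m, c ∉ (if thr n ≤ ((C n j).card:ℝ) then
      ({c | ((((k:ℝ) ^ S.card)⁻¹ + ε/2) * (C n j).card : ℝ)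
          ≤ (((C n j).filter fun δ => c ∈ pattA k S φ δ).card : ℝ)} ∪
       {c | (((C n j).filter fun δ => c ∈ pattA k S φ δ).card : ℝ)
          ≤ ((((k:ℝ) ^ S.card)⁻¹ - ε/2) * (C n j).card : ℝ)}) else ∅) := by
    intro j hj hcm
    exact hn (Set.mem_biUnion hj hcm)
  have perj : ∀ j ∈ Finset.range m,
      |((((C n j).filter fun δ => c ∈ pattA k S φ δ).card : ℝ))
        - ((k:ℝ) ^ S.card)⁻¹ * ((C n j).card)|
      ≤ (ε/2) * ((C n j).card) + thr n := by
    intro j hj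
    by_cases hbig : thr n ≤ ((C n j).card : ℝ)
    · have hni := hnotin j hj
      rw [if_pos hbig, Set.mem_union] at hni
      push_neg at hni
      obtain ⟨h1, h2⟩ := hni
      simp only [Set.mem_setOf_eq, not_le] at h1 h2
      set X : ℝ := ((((C n j).filter fun δ => c ∈ pattA k S φ δ).card : ℕ) : ℝ) with hX
      set B : ℝ := (((C n j).card : ℕ) : ℝ) with hB
      have habs : |X - ((k:ℝ) ^ S.card)⁻¹ * B| ≤ (ε/2) * B := by
        rw [abs_le]
        constructor <;> nlinarith
      linarith [hthr0 n]
    · have hsmall : ((C n j).card:ℝ) ≤ thr n := (not_le.1 hbig).le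
      set X : ℝ := ((((C n j).filter fun δ => c ∈ pattA k S φ δ).card : ℕ) : ℝ) with hX
      set B : ℝ := (((C n j).card : ℕ) : ℝ) with hB
      have hXB : X ≤ B := by
        rw [hX, hB]
        exact_mod_cast Finset.card_filter_le _ _
      have hX0 : (0:ℝ) ≤ X := by rw [hX]; exact Nat.cast_nonneg _
      have hB0 : (0:ℝ) ≤ B := by rw [hB]; exact Nat.cast_nonneg _
      have hpB0 : 0 ≤ ((k:ℝ) ^ S.card)⁻¹ * B := mul_nonneg hpr0.le hB0
      have hpB1 : ((k:ℝ) ^ S.card)⁻¹ * B ≤ B := by nlinarith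
      have habs : |X - ((k:ℝ) ^ S.card)⁻¹ * B| ≤ B := by
        rw [abs_le]
        constructor <;> linarith
      have hεB : 0 ≤ (ε/2) * B := by positivity
      linarith
  have key : |(((D n).filter fun δ => c ∈ pattA k S φ δ).card : ℝ)
      - ((k:ℝ) ^ S.card)⁻¹ * ((D n).card)| ≤ ε * ((D n).card) := by
    have e1 : (((D n).filter fun δ => c ∈ pattA k S φ δ).card : ℝ)
        = ∑ j ∈ Finset.range m, ((((C n j).filter fun δ => c ∈ pattA k S φ δ).card : ℝ)) := by
      exact_mod_cast htot
    have e2 : (((D n).card : ℕ) : ℝ) = ∑ j ∈ Finset.range m, ((C n j).card : ℝ) := by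
      exact_mod_cast hcards
    rw [e1, e2, Finset.mul_sum, ← Finset.sum_sub_distrib]
    refine (Finset.abs_sum_le_sum_abs _ _).trans ?_
    refine (Finset.sum_le_sum perj).trans ?_
    rw [Finset.sum_add_distrib, Finset.sum_const, Finset.card_range, ← Finset.mul_sum, ← e2,
      nsmul_eq_mul]
    have e3 : (m:ℝ) * thr n = ε/2 * ((D n).card) := by
      rw [hthr n]
      field_simp
    rw [e3]
    linarith
  have e4 : (((D n).filter fun δ => c ∈ pattA k S φ δ).card : ℝ) / ((D n).card : ℝ)
        - ((k:ℝ) ^ S.card)⁻¹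
      = ((((D n).filter fun δ => c ∈ pattA k S φ δ).card : ℝ)
        - ((k:ℝ) ^ S.card)⁻¹ * ((D n).card)) / ((D n).card) := by
    field_simp
  rw [e4, abs_div, abs_of_pos hd0, div_le_iff₀ hd0]
  exact key
end Main

/-- Pointwise ergodic theorem for patterns in the Bernoulli shift.
Let `μ = u_k^Γ` be the product of uniform measures on `k^Γ` (characterized by its
values on cylinders), and let `(D_n)` be nonempty finite subsets of `Γ` with
`|D_n|/log n → ∞`. Then for every finite `S ⊆ Γ` and every `φ : S → k`, for
`μ`-a.e. `c`, the fraction of occurrences `|D_n ∩ O_φ(c)|/|D_n|` tends to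
`k^{−|S|}`. -/
theorem pointwise_ergodic_patterns_bernoulli
    {Γ : Type*} [Group Γ] [Countable Γ] (k : ℕ) (hk : 0 < k)
    (μ : Measure (Γ → Fin k)) [IsProbabilityMeasure μ]
    (hcyl : ∀ (F : Finset Γ) (ψ : Γ → Fin k),
      μ {c | ∀ γ ∈ F, c γ = ψ γ} = ((k : ℝ≥0∞) ^ F.card)⁻¹)
    (D : ℕ → Finset Γ) (hne : ∀ n, (D n).Nonempty)
    (hgrowth : Tendsto (fun n : ℕ => ((D n).card : ℝ) / Real.log n) atTop atTop)
    (S : Finset Γ) (φ : Γ → Fin k) :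
    ∀ᵐ c ∂μ, Tendsto
      (fun n => (((D n).filter fun δ => ∀ s ∈ S, c (s * δ) = φ s).card : ℝ)
        / ((D n).card : ℝ))
      atTop (𝓝 (((k : ℝ) ^ S.card)⁻¹)) := by
  classical
  rcases S.eq_empty_or_nonempty with rfl | hS
  · refine ae_of_all μ fun c => ?_
    have hconst : ∀ n : ℕ,
        (((D n).filter fun δ => ∀ s ∈ (∅ : Finset Γ), c (s * δ) = φ s).card : ℝ)
          / ((D n).card : ℝ) = 1 := by
      intro n
      rw [Finset.filter_true_of_mem (fun δ _ => by simp)]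
      exact div_self (ne_of_gt (by exact_mod_cast Finset.card_pos.2 (hne n)))
    simp only [Finset.card_empty, pow_zero, inv_one]
    exact Tendsto.congr (fun n => (hconst n).symm) tendsto_const_nhds
  · have hae : ∀ᵐ c ∂μ, ∀ j : ℕ, ∀ᶠ n in atTop,
        |(((D n).filter fun δ => c ∈ pattA k S φ δ).card : ℝ) / ((D n).card : ℝ)
          - ((k:ℝ) ^ S.card)⁻¹| ≤ 1/((j:ℝ)+1) := by
      rw [ae_all_iff]
      intro j
      refine main_eps hk hcyl D hne hgrowth S hS φ (by positivity) ?_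
      rw [div_le_one (by positivity)]
      linarith [Nat.cast_nonneg (α := ℝ) j]
    filter_upwards [hae] with c hc
    have hfil : ∀ n : ℕ, ((D n).filter fun δ => ∀ s ∈ S, c (s * δ) = φ s)
        = ((D n).filter fun δ => c ∈ pattA k S φ δ) := fun n =>
      Finset.filter_congr (fun δ _ => Iff.rfl)
    rw [Metric.tendsto_atTop]
    intro ε hε
    obtain ⟨j, hj⟩ := exists_nat_one_div_lt hε
    obtain ⟨N, hN⟩ := eventually_atTop.1 (hc j)
    refine ⟨N, fun n hn => ?_⟩
    rw [Real.dist_eq, hfil n]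
    exact lt_of_le_of_lt (hN n hn) hj
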